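/- arXiv:1209.5666 — 3 statements merged into one kernel-verified Lean document; each statement's English description precedes it below -/
import Mathlib

section
/- A homogeneous polynomial P of degree n in E[x,y] vanishes at every point of F_q^2 if and only if P is divisible by the Dickson invariant Θ = x·y^q − x^q·y. -/
/-!
STATEMENT 1: A homogeneous polynomial `P` of degree `n` in `E[x,y]` vanishes at every
point of `𝔽_q²` if and only if `P` is divisible by the Dickson invariant
`Θ = x·y^q − x^q·y`.  Here `E` is an algebraically closed field containing `𝔽_q`.
-/

open MvPolynomial

noncomputable section

variable (𝔽 : Type) [Field 𝔽] [Fintype 𝔽]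
  (E : Type) [Field E] [IsAlgClosed E] [Algebra 𝔽 E]

/-- The Dickson invariant `Θ = x y^q − x^q y`. -/
def Theta (q : ℕ) : MvPolynomial (Fin 2) E := X 0 * X 1 ^ q - X 0 ^ q * X 1

namespace DicksonAux

variable {K : Type*} [Field K]

/-- substitution `y := c x` -/
def sub1 (c : K) : MvPolynomial (Fin 2) K →ₐ[K] MvPolynomial (Fin 2) K :=
  aeval ![X 0, C c * X 0]

/-- substitution `x := 0` -/
def sub0 : MvPolynomial (Fin 2) K →ₐ[K] MvPolynomial (Fin 2) K :=
  aeval ![0, X 1]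

lemma sub1_X0 (c : K) : sub1 c (X 0) = X 0 := by simp [sub1]
lemma sub1_X1 (c : K) : sub1 c (X 1) = C c * X 0 := by simp [sub1]
lemma sub0_X0 : (sub0 (X 0) : MvPolynomial (Fin 2) K) = 0 := by simp [sub0]
lemma sub0_X1 : (sub0 (X 1) : MvPolynomial (Fin 2) K) = X 1 := by simp [sub0]

lemma sub1_dvd (c : K) (P : MvPolynomial (Fin 2) K) :
    (X 1 - C c * X 0) ∣ (P - sub1 c P) := by
  induction P using MvPolynomial.induction_on with
  | C a => simp [sub1]
  | add p q hp hq =>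
      rw [map_add]
      have : p + q - (sub1 c p + sub1 c q) = (p - sub1 c p) + (q - sub1 c q) := by ring
      rw [this]; exact dvd_add hp hq
  | mul_X p i hp =>
      obtain ⟨r, hr⟩ := hp
      rw [map_mul]
      fin_cases i
      · show (X 1 - C c * X 0) ∣ (p * X 0 - sub1 c p * sub1 c (X 0))
        refine ⟨r * X 0, ?_⟩
        rw [sub1_X0]; linear_combination (X (R := K) 0) * hr
      · show (X 1 - C c * X 0) ∣ (p * X 1 - sub1 c p * sub1 c (X 1))
        refine ⟨p + C c * X 0 * r, ?_⟩
        rw [sub1_X1]; linear_combination (C c * X (R := K) 0) * hr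

lemma sub0_dvd (P : MvPolynomial (Fin 2) K) :
    (X 0) ∣ (P - sub0 P) := by
  induction P using MvPolynomial.induction_on with
  | C a => simp [sub0]
  | add p q hp hq =>
      rw [map_add]
      have : p + q - (sub0 p + sub0 q) = (p - sub0 p) + (q - sub0 q) := by ring
      rw [this]; exact dvd_add hp hq
  | mul_X p i hp =>
      obtain ⟨r, hr⟩ := hp
      rw [map_mul]
      fin_cases i
      · show (X 0 : MvPolynomial (Fin 2) K) ∣ (p * X 0 - sub0 p * sub0 (X 0))
        refine ⟨p, ?_⟩
        rw [sub0_X0]; ring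
      · show (X 0 : MvPolynomial (Fin 2) K) ∣ (p * X 1 - sub0 p * sub0 (X 1))
        refine ⟨r * X 1, ?_⟩
        rw [sub0_X1]; linear_combination (X (R := K) 1) * hr

lemma sub1_dvd_iff (c : K) (P : MvPolynomial (Fin 2) K) :
    (X 1 - C c * X 0) ∣ P ↔ sub1 c P = 0 := by
  constructor
  · rintro ⟨t, rfl⟩
    rw [map_mul]
    have : sub1 c (X 1 - C c * X 0) = 0 := by
      rw [map_sub, map_mul, sub1_X0, sub1_X1]
      simp [sub1]
    rw [this, zero_mul]
  · intro h
    have := sub1_dvd c P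
    rwa [h, sub_zero] at this

lemma sub0_dvd_iff (P : MvPolynomial (Fin 2) K) :
    (X 0) ∣ P ↔ sub0 P = 0 := by
  constructor
  · rintro ⟨t, rfl⟩
    rw [map_mul, sub0_X0, zero_mul]
  · intro h
    have := sub0_dvd P
    rwa [h, sub_zero] at this

lemma prime_lin (c : K) : Prime (X 1 - C c * X 0 : MvPolynomial (Fin 2) K) := by
  refine ⟨?_, ?_, ?_⟩
  · intro h
    have := congrArg (eval ![(0:K),1]) h
    simp at this
  · intro h
    have h1 : (X 1 - C c * X 0 : MvPolynomial (Fin 2) K) ∣ 1 := h.dvd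
    rw [sub1_dvd_iff, map_one] at h1
    exact one_ne_zero h1
  · intro a b h
    rw [sub1_dvd_iff, map_mul] at h
    rcases mul_eq_zero.mp h with h | h
    · exact Or.inl ((sub1_dvd_iff c a).mpr h)
    · exact Or.inr ((sub1_dvd_iff c b).mpr h)

lemma prime_X0 : Prime (X 0 : MvPolynomial (Fin 2) K) := by
  refine ⟨X_ne_zero 0, ?_, ?_⟩
  · intro h
    have h1 : (X 0 : MvPolynomial (Fin 2) K) ∣ 1 := h.dvd
    rw [sub0_dvd_iff, map_one] at h1
    exact one_ne_zero h1
  · intro a b h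
    rw [sub0_dvd_iff, map_mul] at h
    rcases mul_eq_zero.mp h with h | h
    · exact Or.inl ((sub0_dvd_iff a).mpr h)
    · exact Or.inr ((sub0_dvd_iff b).mpr h)

lemma prod_primes_dvd {α : Type*} [CommMonoidWithZero α] {ι : Type*}
    (s : Finset ι) (f : ι → α) (hp : ∀ i ∈ s, Prime (f i))
    (hd : ∀ i ∈ s, ∀ j ∈ s, i ≠ j → ¬ f i ∣ f j) {z : α}
    (h : ∀ i ∈ s, f i ∣ z) : (∏ i ∈ s, f i) ∣ z := by
  classical
  induction s using Finset.cons_induction generalizing z with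
  | empty => simp only [Finset.prod_empty]; exact one_dvd z
  | cons a s ha ih =>
    obtain ⟨w, rfl⟩ := h a (Finset.mem_cons_self a s)
    rw [Finset.prod_cons]
    have hw : ∀ i ∈ s, f i ∣ w := by
      intro i hi
      have hdvd : f i ∣ f a * w := h i (Finset.mem_cons_of_mem hi)
      rcases (hp i (Finset.mem_cons_of_mem hi)).2.2 _ _ hdvd with h1 | h1
      · exact absurd h1
          (hd i (Finset.mem_cons_of_mem hi) a (Finset.mem_cons_self a s)
            (by rintro rfl; exact ha hi))
      · exact h1
    exact mul_dvd_mul_left _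
      (ih (fun i hi => hp i (Finset.mem_cons_of_mem hi))
        (fun i hi j hj hij =>
          hd i (Finset.mem_cons_of_mem hi) j (Finset.mem_cons_of_mem hj) hij) hw)

lemma eval_aeval' (g : Fin 2 → MvPolynomial (Fin 2) K) (x : Fin 2 → K)
    (P : MvPolynomial (Fin 2) K) :
    eval x (aeval g P) = eval (fun i => eval x (g i)) P := by
  rw [aeval_def, eval_eval₂]
  have h : ((eval x).comp C : K →+* K) = RingHom.id K := by
    ext a; simp
  rw [show (algebraMap K (MvPolynomial (Fin 2) K)) = C from rfl, h, eval₂_id]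

lemma eval_smul_of_homog {P : MvPolynomial (Fin 2) K} {n : ℕ}
    (hP : P.IsHomogeneous n) (t : K) (v : Fin 2 → K) :
    eval (t • v) P = t ^ n * eval v P := by
  rw [eval_eq, eval_eq, Finset.mul_sum]
  refine Finset.sum_congr rfl fun d hd => ?_
  have hdeg : d.degree = n := by
    rw [Finsupp.degree_eq_weight_one]
    exact hP (mem_support_iff.mp hd)
  have hsum : ∑ i ∈ d.support, d i = n := hdeg
  have hkey : ∏ i ∈ d.support, (t • v) i ^ d i
      = t ^ n * ∏ i ∈ d.support, v i ^ d i := by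
    calc ∏ i ∈ d.support, (t • v) i ^ d i
        = ∏ i ∈ d.support, (t ^ d i * v i ^ d i) := by
          refine Finset.prod_congr rfl fun i _ => ?_
          rw [Pi.smul_apply, smul_eq_mul, mul_pow]
      _ = (∏ i ∈ d.support, t ^ d i) * ∏ i ∈ d.support, v i ^ d i :=
          Finset.prod_mul_distrib
      _ = t ^ n * ∏ i ∈ d.support, v i ^ d i := by
          rw [Finset.prod_pow_eq_pow_sum, hsum]
  rw [hkey]; ring

end DicksonAux

open DicksonAux in
theorem vanishing_iff_dickson_dvd (n : ℕ) (P : MvPolynomial (Fin 2) E)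
    (hP : P ∈ homogeneousSubmodule (Fin 2) E n) :
    (∀ v : Fin 2 → 𝔽, eval (fun i => algebraMap 𝔽 E (v i)) P = 0) ↔
      Theta E (Fintype.card 𝔽) ∣ P := by
  classical
  set q := Fintype.card 𝔽 with hq
  set f := algebraMap 𝔽 E with hf
  have hhom : P.IsHomogeneous n := hP
  -- the product of X - c over all c of 𝔽 is X^q - X
  have hpoly : (∏ c : 𝔽, (Polynomial.X - Polynomial.C c)) =
      Polynomial.X ^ q - Polynomial.X := by
    have hm : (Polynomial.X ^ q - Polynomial.X : Polynomial 𝔽).Monic := by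
      refine (Polynomial.monic_X_pow q).sub_of_left ?_
      rw [Polynomial.degree_X, Polynomial.degree_X_pow]
      exact_mod_cast Fintype.one_lt_card
    have hr := FiniteField.roots_X_pow_card_sub_X (K := 𝔽)
    have hd := FiniteField.X_pow_card_sub_X_natDegree_eq 𝔽 (Fintype.one_lt_card (α := 𝔽))
    have hcard : Multiset.card (Polynomial.X ^ q - Polynomial.X : Polynomial 𝔽).roots =
        (Polynomial.X ^ q - Polynomial.X : Polynomial 𝔽).natDegree := by
      rw [hr, hd]; simp [hq]
    have hprod := Polynomial.prod_multiset_X_sub_C_of_monic_of_roots_card_eq hm hcard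
    rw [hr] at hprod
    rw [← hprod, Finset.prod_eq_multiset_prod]
  have prodlem : ∀ t : E, ∏ c : 𝔽, (t - f c) = t ^ q - t := by
    intro t
    have h2 : ∏ c : 𝔽, (Polynomial.X - Polynomial.C (f c)) =
        (Polynomial.X : Polynomial E) ^ q - Polynomial.X := by
      calc ∏ c : 𝔽, (Polynomial.X - Polynomial.C (f c))
          = ∏ c : 𝔽, (Polynomial.mapRingHom f) (Polynomial.X - Polynomial.C c) := by
            refine Finset.prod_congr rfl fun c _ => ?_
            simp
        _ = (Polynomial.mapRingHom f) (∏ c : 𝔽, (Polynomial.X - Polynomial.C c)) :=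
            (map_prod _ _ _).symm
        _ = _ := by rw [hpoly]; simp
    have := congrArg (Polynomial.eval t) h2
    simpa [Polynomial.eval_prod] using this
  have scalar_id : ∀ a b : E, a * ∏ c : 𝔽, (b - f c * a) = a * b ^ q - a ^ q * b := by
    intro a b
    rcases eq_or_ne a 0 with rfl | ha
    · simp [zero_pow Fintype.card_ne_zero, hq]
    · have h2 : ∀ c : 𝔽, b - f c * a = a * (b / a - f c) := by
        intro c; field_simp
      rw [Finset.prod_congr rfl (fun c _ => h2 c), Finset.prod_mul_distrib,
        Finset.prod_const, Finset.card_univ, prodlem (b / a), div_pow]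
      field_simp
      ring
  -- Theta = X0 * ∏ (X1 - C (f c) * X0)
  have hTheta : Theta E q = X 0 * ∏ c : 𝔽, (X 1 - C (f c) * X 0) := by
    apply MvPolynomial.funext
    intro x
    rw [Theta]
    simp only [map_sub, map_mul, map_pow, eval_X, eval_prod, map_prod, eval_C]
    rw [← scalar_id (x 0) (x 1)]
  constructor
  · intro hv
    have key1 : ∀ c : 𝔽, (X 1 - C (f c) * X 0) ∣ P := by
      intro c
      rw [sub1_dvd_iff]
      apply MvPolynomial.funext
      intro x
      rw [map_zero]
      have h1 : eval x (sub1 (f c) P) = eval ((x 0) • ![1, f c]) P := by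
        rw [sub1, eval_aeval']
        have hvec : (fun i => eval x (![X 0, C (f c) * X 0] i)) = (x 0) • ![1, f c] := by
          funext i
          fin_cases i <;> simp [mul_comm]
        rw [hvec]
      rw [h1, eval_smul_of_homog hhom]
      have h2 : (![1, f c] : Fin 2 → E) = fun i => f ((![1, c] : Fin 2 → 𝔽) i) := by
        funext i
        fin_cases i <;> simp
      rw [h2, hv ![1, c], mul_zero]
    have key0 : (X 0 : MvPolynomial (Fin 2) E) ∣ P := by
      rw [sub0_dvd_iff]
      apply MvPolynomial.funext
      intro x
      rw [map_zero]
      have h1 : eval x (sub0 P) = eval ((x 1) • ![0, 1]) P := by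
        rw [sub0, eval_aeval']
        have hvec : (fun i => eval x (![0, X 1] i)) = (x 1) • ![0, 1] := by
          funext i
          fin_cases i <;> simp
        rw [hvec]
      rw [h1, eval_smul_of_homog hhom]
      have h2 : (![0, 1] : Fin 2 → E) = fun i => f ((![0, 1] : Fin 2 → 𝔽) i) := by
        funext i
        fin_cases i <;> simp
      rw [h2, hv ![0, 1], mul_zero]
    -- assemble
    set g : Option 𝔽 → MvPolynomial (Fin 2) E :=
      fun o => Option.elim o (X 0) (fun c => X 1 - C (f c) * X 0) with hg
    have hprod : (∏ o : Option 𝔽, g o) ∣ P := by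
      refine prod_primes_dvd _ _ ?_ ?_ ?_
      · rintro (_ | c) _
        · exact prime_X0
        · exact prime_lin (f c)
      · rintro (_ | c) _ (_ | c') _ hne hdvd
        · exact hne rfl
        · rw [hg] at hdvd
          simp only [Option.elim] at hdvd
          rw [sub0_dvd_iff] at hdvd
          simp only [map_sub, map_mul, sub0_X0, sub0_X1] at hdvd
          rw [mul_zero, sub_zero] at hdvd
          exact X_ne_zero 1 hdvd
        · rw [hg] at hdvd
          simp only [Option.elim] at hdvd
          rw [sub1_dvd_iff, sub1_X0] at hdvd
          exact X_ne_zero 0 hdvd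
        · rw [hg] at hdvd
          simp only [Option.elim] at hdvd
          rw [sub1_dvd_iff] at hdvd
          simp only [map_sub, map_mul, sub1_X0, sub1_X1] at hdvd
          have hcc : c ≠ c' := fun h => hne (by rw [h])
          have hC : sub1 (f c) (C (f c') : MvPolynomial (Fin 2) E) = C (f c') := by
            simp [sub1]
          rw [hC] at hdvd
          have h0 : ((C (f c) - C (f c')) * X 0 : MvPolynomial (Fin 2) E) = 0 := by
            rw [sub_mul]; linear_combination hdvd
          rcases mul_eq_zero.mp h0 with h0 | h0
          · rw [← map_sub, MvPolynomial.C_eq_zero, sub_eq_zero] at h0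
            exact hcc ((algebraMap 𝔽 E).injective h0)
          · exact X_ne_zero 0 h0
      · rintro (_ | c) _
        · exact key0
        · exact key1 c
    rw [hTheta]
    have hopt : (∏ o : Option 𝔽, g o) = X 0 * ∏ c : 𝔽, (X 1 - C (f c) * X 0) := by
      rw [Fintype.prod_option]
      simp [hg]
    rwa [← hopt]
  · rintro ⟨t, rfl⟩ v
    rw [map_mul]
    have hZ : eval (fun i => f (v i)) (Theta E q) = 0 := by
      simp only [Theta, map_sub, map_mul, map_pow, eval_X]
      rw [← map_pow, FiniteField.pow_card, ← map_pow, FiniteField.pow_card]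
      ring
    rw [hZ, zero_mul]
end
end

section
/- Fix f ≥ 1 and the directed graph with four vertices labeled by the functions x↦x, x↦p−1−x, x↦x+1, x↦p−2−x (with edges: loops at the top two vertices, x↦x+1 → x↦x, x↦x → x↦p−2−x, x↦p−1−x → x↦x+1, x↦p−2−x → x↦p−1−x, and edges both ways between x↦x+1 and x↦p−2−x). Then the number of closed paths of length f in this graph is exactly 2^f. -/
/-!
STATEMENT 14: Consider the directed graph with four vertices labeled by the functions
`x ↦ x` (vertex 0), `x ↦ p−1−x` (vertex 1), `x ↦ x+1` (vertex 2), `x ↦ p−2−x` (vertex 3),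
with edges: loops at vertices 0 and 1, `2 → 0`, `0 → 3`, `1 → 2`, `3 → 1`, and edges both
ways between `2` and `3`.  Then the number of closed paths of length `f` in this graph is
exactly `2^f`.  A closed path of length `f` is a sequence of vertices `c_0, …, c_{f−1}`
(cyclically indexed, so that `c_f = c_0`) with a directed edge from `c_i` to `c_{i+1}`.
-/

/-- The edge set of the graph. -/
def edges : Finset (Fin 4 × Fin 4) :=
  {(0, 0), (1, 1), (2, 0), (0, 3), (1, 2), (3, 1), (2, 3), (3, 2)}

namespace CP14

def s : Fin 4 → ZMod 2 := ![0, 1, 0, 1]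
def t : Fin 4 → ZMod 2 := ![0, 0, 1, 1]
def V : ZMod 2 → ZMod 2 → Fin 4 := fun a b =>
  if b = 0 then (if a = 0 then 0 else 1) else (if a = 0 then 2 else 3)

lemma edge_iff (u v : Fin 4) : (u, v) ∈ edges ↔ s v = s u + t v := by
  revert u v; decide

lemma V_st (v : Fin 4) : V (s v) (t v) = v := by revert v; decide
lemma s_V (a b : ZMod 2) : s (V a b) = a := by revert a b; decide
lemma t_V (a b : ZMod 2) : t (V a b) = b := by revert a b; decide

lemma sum_shift {f : ℕ} (b : ℕ → ZMod 2) (hb : ∀ i, b (i + f) = b i) (i : ℕ) :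
    ∑ j ∈ Finset.range f, b (j + i) = ∑ j ∈ Finset.range f, b j := by
  induction i with
  | zero => simp
  | succ n ih =>
    rw [← ih]
    rcases Nat.eq_zero_or_pos f with h | h
    · simp [h]
    obtain ⟨m, rfl⟩ : ∃ m, f = m + 1 := ⟨f - 1, by omega⟩
    rw [Finset.sum_range_succ, Finset.sum_range_succ']
    congr 1
    · exact Finset.sum_congr rfl fun j _ => by congr 1; omega
    · rw [Nat.zero_add, show m + (n + 1) = n + (m + 1) by omega, hb]

lemma sum_range_add (g : ℕ → ZMod 2) (a b : ℕ) :
    ∑ j ∈ Finset.range (a + b), g j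
      = ∑ j ∈ Finset.range a, g j + ∑ j ∈ Finset.range b, g (a + j) := by
  induction b with
  | zero => simp
  | succ n ih =>
    rw [Nat.add_succ, Finset.sum_range_succ, Finset.sum_range_succ, ih, add_assoc]

lemma s_formula (c : ℕ → Fin 4) (hc : ∀ i, (c i, c (i + 1)) ∈ edges) (i : ℕ) :
    s (c i) = s (c 0) + ∑ j ∈ Finset.range i, t (c (j + 1)) := by
  induction i with
  | zero => simp
  | succ n ih =>
    have h := (edge_iff _ _).mp (hc n)
    rw [Finset.sum_range_succ, h, ih, add_assoc]

lemma per_mod {f : ℕ} (b : ℕ → ZMod 2) (hb : ∀ i, b (i + f) = b i) (n : ℕ) :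
    b (n % f) = b n := by
  induction n using Nat.strong_induction_on with
  | _ n ih =>
    rcases lt_or_ge n f with h | h
    · rw [Nat.mod_eq_of_lt h]
    · rcases Nat.eq_zero_or_pos f with hf | hf
      · simp [hf]
      have h1 : n - f + f = n := Nat.sub_add_cancel h
      have h2 := hb (n - f)
      rw [h1] at h2
      rw [h2, ← ih (n - f) (by omega), Nat.mod_eq_sub_mod h]

/-- periodic sequences summing to zero over a period -/
def PerSum (f : ℕ) : Type :=
  {b : ℕ → ZMod 2 // (∀ i, b (i + f) = b i) ∧ ∑ j ∈ Finset.range f, b j = 0}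

/-- Walks correspond to a starting `s`-bit together with the periodic `t`-bit sequence. -/
def E1 (f : ℕ) :
    {c : ℕ → Fin 4 // (∀ i, c (i + f) = c i) ∧ ∀ i, (c i, c (i + 1)) ∈ edges}
      ≃ ZMod 2 × PerSum f where
  toFun c := (s (c.1 0), ⟨fun n => t (c.1 n),
    fun i => by show t (c.1 (i + f)) = t (c.1 i); rw [c.2.1 i], by
    show ∑ j ∈ Finset.range f, t (c.1 j) = 0
    have hper := c.2.1 0
    rw [Nat.zero_add] at hper
    have h1 := s_formula c.1 c.2.2 f
    rw [hper] at h1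
    have h2 : ∑ j ∈ Finset.range f, t (c.1 (j + 1)) = 0 := left_eq_add.mp h1
    have h3 : ∑ j ∈ Finset.range f, t (c.1 (j + 1)) = ∑ j ∈ Finset.range f, t (c.1 j) :=
      sum_shift (fun n => t (c.1 n))
        (fun i => by show t (c.1 (i + f)) = t (c.1 i); rw [c.2.1 i]) 1
    rw [← h3]
    exact h2⟩)
  invFun p := ⟨fun i => V (p.1 + ∑ j ∈ Finset.range i, p.2.1 (j + 1)) (p.2.1 i), by
    constructor
    · intro i
      have hsum : ∑ j ∈ Finset.range (i + f), p.2.1 (j + 1)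
          = ∑ j ∈ Finset.range i, p.2.1 (j + 1) := by
        rw [sum_range_add]
        have h4 : ∑ j ∈ Finset.range f, p.2.1 (i + j + 1)
            = ∑ j ∈ Finset.range f, p.2.1 (j + 1) := by
          have h : ∑ j ∈ Finset.range f, p.2.1 (j + i + 1)
              = ∑ j ∈ Finset.range f, p.2.1 (j + 1) :=
            sum_shift (fun n => p.2.1 (n + 1))
              (fun k => by
                show p.2.1 (k + f + 1) = p.2.1 (k + 1)
                rw [show k + f + 1 = k + 1 + f from by omega, p.2.2.1]) i
          exact (Finset.sum_congr rfl fun j _ => congrArg p.2.1 (by omega)).trans h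
        have h5 : ∑ j ∈ Finset.range f, p.2.1 (j + 1) = 0 := by
          have h := sum_shift p.2.1 p.2.2.1 1
          rw [h, p.2.2.2]
        rw [h4, h5, add_zero]
      show V (p.1 + ∑ j ∈ Finset.range (i + f), p.2.1 (j + 1)) (p.2.1 (i + f))
          = V (p.1 + ∑ j ∈ Finset.range i, p.2.1 (j + 1)) (p.2.1 i)
      rw [hsum, p.2.2.1 i]
    · intro i
      show (V (p.1 + ∑ j ∈ Finset.range i, p.2.1 (j + 1)) (p.2.1 i),
        V (p.1 + ∑ j ∈ Finset.range (i + 1), p.2.1 (j + 1)) (p.2.1 (i + 1))) ∈ edges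
      rw [edge_iff, s_V, s_V, t_V, Finset.sum_range_succ, add_assoc]⟩
  left_inv c := by
    apply Subtype.ext
    funext i
    show V (s (c.1 0) + ∑ j ∈ Finset.range i, t (c.1 (j + 1))) (t (c.1 i)) = c.1 i
    rw [← s_formula c.1 c.2.2 i, V_st]
  right_inv p := by
    obtain ⟨a, b⟩ := p
    refine Prod.ext ?_ (Subtype.ext ?_)
    · show s (V (a + ∑ j ∈ Finset.range 0, b.1 (j + 1)) (b.1 0)) = a
      rw [Finset.sum_range_zero, add_zero, s_V]
    · funext n
      show t (V _ (b.1 n)) = b.1 n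
      rw [t_V]

/-- Restrict a periodic sequence to one period. -/
def E3 {f : ℕ} (hf : 0 < f) : PerSum f ≃ {u : Fin f → ZMod 2 // ∑ i, u i = 0} where
  toFun b := ⟨fun i => b.1 i, by
    rw [show ∑ i : Fin f, b.1 i = ∑ j ∈ Finset.range f, b.1 j from
      Fin.sum_univ_eq_sum_range _ f]
    exact b.2.2⟩
  invFun u := ⟨fun n => u.1 ⟨n % f, Nat.mod_lt n hf⟩, by
    constructor
    · intro i
      show u.1 ⟨(i + f) % f, _⟩ = u.1 ⟨i % f, _⟩
      exact congrArg u.1 (Fin.ext (Nat.add_mod_right i f))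
    · show ∑ j ∈ Finset.range f, u.1 ⟨j % f, Nat.mod_lt j hf⟩ = 0
      rw [← Fin.sum_univ_eq_sum_range (fun k => u.1 ⟨k % f, Nat.mod_lt k hf⟩) f]
      refine Eq.trans ?_ u.2
      exact Finset.sum_congr rfl fun i _ =>
        congrArg u.1 (Fin.ext (Nat.mod_eq_of_lt i.isLt))⟩
  left_inv b := by
    apply Subtype.ext
    funext n
    exact per_mod b.1 b.2.1 n
  right_inv u := by
    apply Subtype.ext
    funext i
    exact congrArg u.1 (Fin.ext (Nat.mod_eq_of_lt i.isLt))

/-- Drop the last (determined) bit. -/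
def E4 (m : ℕ) : {u : Fin (m + 1) → ZMod 2 // ∑ i, u i = 0} ≃ (Fin m → ZMod 2) where
  toFun u := Fin.init u.1
  invFun v := ⟨Fin.snoc v (-∑ i, v i), by
    rw [Fin.sum_univ_castSucc]
    simp only [Fin.snoc_castSucc, Fin.snoc_last, add_neg_cancel]⟩
  left_inv u := by
    apply Subtype.ext
    have h := u.2
    rw [Fin.sum_univ_castSucc] at h
    funext i
    refine Fin.lastCases ?_ ?_ i
    · show Fin.snoc (Fin.init u.1) (-∑ i : Fin m, Fin.init u.1 i) (Fin.last m)
        = u.1 (Fin.last m)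
      rw [Fin.snoc_last]
      have h6 : ∑ i : Fin m, Fin.init u.1 i = ∑ i : Fin m, u.1 i.castSucc :=
        Finset.sum_congr rfl fun i _ => rfl
      rw [h6]
      linear_combination -h
    · intro j
      show Fin.snoc (Fin.init u.1) (-∑ i : Fin m, Fin.init u.1 i) j.castSucc
        = u.1 j.castSucc
      rw [Fin.snoc_castSucc]
      rfl
  right_inv v := Fin.init_snoc _ _

end CP14

theorem card_closed_paths (f : ℕ) (hf : 1 ≤ f) :
    -- closed paths of length `f` are encoded as `f`-periodic walks `c : ℕ → Fin 4`
    Nat.card {c : ℕ → Fin 4 // (∀ i, c (i + f) = c i) ∧ ∀ i, (c i, c (i + 1)) ∈ edges}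
      = 2 ^ f := by
  obtain ⟨m, rfl⟩ : ∃ m, f = m + 1 := ⟨f - 1, by omega⟩
  have E := (CP14.E1 (m + 1)).trans
    ((Equiv.refl (ZMod 2)).prodCongr ((CP14.E3 (by omega)).trans (CP14.E4 m)))
  rw [Nat.card_congr E, Nat.card_eq_fintype_card]
  simp [Fintype.card_fun, ZMod.card, pow_succ]
  ring
end

section
/- Let q = p^f and let 0 ≤ n ≤ q−1 have base-p digits n_0,…,n_{f−1}, with r_n the number of digits equal to p−1. Define ω(n) to be the number of closed paths c of length f in the graph on functions {x↦x, x↦p−1−x, x↦x+1, x↦p−2−x} that are compatible with n (i.e. 0 ≤ μ^c_i(n_i) ≤ p−1 for all i, where μ^c_i is the function at the i-th vertex) and such that μ^c(n) := Σ_i μ^c_i(n_i)p^i ≠ q−1. Then ω(0) = 2^f − 1, ω(q−1) = 1, and ω(n) = 2^{f−r_n} for 0 < n < q−1. -/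
/-- The function attached to each vertex of the graph. -/
def vf (p : ℕ) : Fin 4 → ℤ → ℤ := fun v x =>
  if v = 0 then x else if v = 1 then (p : ℤ) - 1 - x
  else if v = 2 then x + 1 else (p : ℤ) - 2 - x

/-- The `i`-th base-`p` digit of `n`, as an integer. -/
def digit (p n i : ℕ) : ℤ := ((Nat.digits p n).getD i 0 : ℤ)

/-- `ω(n)`: the number of closed paths of length `f` compatible with `n` such that
`μ^c(n) ≠ q − 1`. -/
noncomputable def omega (p f n : ℕ) : ℕ :=
  Nat.card {c : ℕ → Fin 4 //
    (∀ i, c (i + f) = c i) ∧ (∀ i, (c i, c (i + 1)) ∈ edges)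
    ∧ (∀ i < f, 0 ≤ vf p (c i) (digit p n i) ∧ vf p (c i) (digit p n i) ≤ (p : ℤ) - 1)
    ∧ (∑ i ∈ Finset.range f, vf p (c i) (digit p n i) * (p : ℤ) ^ i) ≠ (p : ℤ) ^ f - 1}

def sgn (v : Fin 4) : Bool := decide (v = 1 ∨ v = 3)

def mkv (b a : Bool) : Fin 4 :=
  if b then (if a then 1 else 3) else (if a then 2 else 0)

lemma sgn_mkv (b a : Bool) : sgn (mkv b a) = b := by cases b <;> cases a <;> decide

lemma edges_iff (u v : Fin 4) : (u, v) ∈ edges ↔ v = mkv (sgn v) (sgn u) := by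
  revert u v; decide

-- digit bounds
lemma digit_nonneg (p n i : ℕ) : 0 ≤ digit p n i := Int.natCast_nonneg _

lemma digit_le (p n i : ℕ) (hp : 2 ≤ p) : digit p n i ≤ (p : ℤ) - 1 := by
  have h : (Nat.digits p n).getD i 0 < p := by
    rcases lt_or_ge i (Nat.digits p n).length with h | h
    · rw [List.getD_eq_getElem _ _ h]
      exact Nat.digits_lt_base hp (List.getElem_mem _)
    · rw [List.getD_eq_default _ _ h]; omega
  unfold digit; omega

lemma digits_pow_sub_one (p : ℕ) (hp : 2 ≤ p) (f : ℕ) :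
    Nat.digits p (p ^ f - 1) = List.replicate f (p - 1) := by
  induction f with
  | zero => simp
  | succ f ih =>
    have h1 : 1 ≤ p ^ f := Nat.one_le_pow _ _ (by omega)
    have hpf : p ^ (f + 1) = p * p ^ f := by ring
    have h2 : 0 < p ^ (f+1) - 1 := by
      have : p ≤ p ^ (f+1) := Nat.le_self_pow (by omega) p
      omega
    have e : (p ^ f - 1) * p = p * p ^ f - p := by
      rw [Nat.sub_mul, one_mul, mul_comm]
    have hle : p ≤ p * p ^ f := Nat.le_mul_of_pos_right p (by omega)
    have key : p ^ (f+1) - 1 = (p - 1) + (p ^ f - 1) * p := by omega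
    rw [Nat.digits_def' (by omega : 1 < p) h2]
    have hmod : (p ^ (f+1) - 1) % p = p - 1 := by
      rw [key, Nat.add_mul_mod_self_right, Nat.mod_eq_of_lt (by omega)]
    have hdiv : (p ^ (f+1) - 1) / p = p ^ f - 1 := by
      rw [key, Nat.add_mul_div_right _ _ (by omega : 0 < p), Nat.div_eq_of_lt (by omega)]
      omega
    rw [hmod, hdiv, ih, List.replicate_succ]

open Finset in
lemma sum_eq_iff_allmax (p f : ℕ) (hp : 2 ≤ p) (t : ℕ → ℤ)
    (ht : ∀ i < f, 0 ≤ t i ∧ t i ≤ (p : ℤ) - 1) :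
    (∑ i ∈ range f, t i * (p : ℤ) ^ i) = (p : ℤ) ^ f - 1 ↔
      ∀ i < f, t i = (p : ℤ) - 1 := by
  have hppos : (0:ℤ) < (p:ℤ) := by exact_mod_cast (by omega : 0 < p)
  have hgeom : ∑ i ∈ range f, ((p:ℤ) - 1) * (p:ℤ) ^ i = (p:ℤ) ^ f - 1 := by
    calc ∑ i ∈ range f, ((p:ℤ)-1) * (p:ℤ)^i
        = (∑ i ∈ range f, (p:ℤ)^i) * ((p:ℤ)-1) := by
          rw [Finset.sum_mul]; exact Finset.sum_congr rfl fun i _ => mul_comm _ _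
      _ = _ := geom_sum_mul _ _
  constructor
  · intro hsum
    by_contra hc
    push_neg at hc
    obtain ⟨j, hj, hne⟩ := hc
    have hlt : (∑ i ∈ range f, t i * (p:ℤ) ^ i) < ∑ i ∈ range f, ((p:ℤ)-1) * (p:ℤ)^i := by
      refine Finset.sum_lt_sum (fun i hi => ?_) ⟨j, mem_range.mpr hj, ?_⟩
      · exact mul_le_mul_of_nonneg_right (ht i (mem_range.mp hi)).2 (pow_nonneg hppos.le i)
      · exact mul_lt_mul_of_pos_right (lt_of_le_of_ne (ht j hj).2 hne) (pow_pos hppos j)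
    omega
  · intro hall
    rw [Finset.sum_congr rfl (fun i hi => by rw [hall i (mem_range.mp hi)])]
    exact hgeom

open Fin.CommRing

def vtx {m : ℕ} (s : Fin (m+1) → Bool) (i : Fin (m+1)) : Fin 4 := mkv (s i) (s (i-1))

def walk {m : ℕ} (s : Fin (m+1) → Bool) : ℕ → Fin 4 := fun i => vtx s (i : Fin (m+1))

lemma sgn_vtx {m : ℕ} (s : Fin (m+1) → Bool) (i : Fin (m+1)) : sgn (vtx s i) = s i :=
  sgn_mkv _ _

lemma vtx_succ {m : ℕ} (s : Fin (m+1) → Bool) (j : Fin (m+1)) :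
    vtx s (j+1) = mkv (s (j+1)) (s j) := by simp [vtx]

lemma fin_cast_m_add_one {m : ℕ} : ((m : ℕ) : Fin (m+1)) + 1 = 0 := by
  have h := Fin.natCast_self (m+1)
  push_cast at h
  exact h

lemma walk_periodic {m : ℕ} (s : Fin (m+1) → Bool) (i : ℕ) :
    walk s (i + (m+1)) = walk s i := by
  unfold walk; congr 1
  rw [Nat.cast_add, Fin.natCast_self, add_zero]

lemma walk_edges {m : ℕ} (s : Fin (m+1) → Bool) (i : ℕ) :
    (walk s i, walk s (i+1)) ∈ edges := by
  have h1 : ((i+1 : ℕ) : Fin (m+1)) = (i : Fin (m+1)) + 1 := by push_cast; ring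
  unfold walk
  rw [edges_iff, h1, vtx_succ, sgn_mkv, sgn_vtx]

lemma walk_inj {m : ℕ} {s s' : Fin (m+1) → Bool} (h : walk s = walk s') : s = s' := by
  funext j
  have := congrFun h j.val
  unfold walk at this
  rw [Fin.cast_val_eq_self] at this
  calc s j = sgn (vtx s j) := (sgn_vtx s j).symm
    _ = sgn (vtx s' j) := by rw [this]
    _ = s' j := sgn_vtx s' j

lemma walk_eq {m : ℕ} (c : ℕ → Fin 4) (hper : ∀ i, c (i + (m+1)) = c i)
    (hedge : ∀ i, (c i, c (i + 1)) ∈ edges) :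
    walk (fun j : Fin (m+1) => sgn (c j.val)) = c := by
  have hmod : ∀ i, c i = c (i % (m+1)) := by
    have hP : Function.Periodic c (m+1) := hper
    intro i; exact (hP.map_mod_nat i).symm
  funext i
  set s : Fin (m+1) → Bool := fun j => sgn (c j.val) with hs
  set M := i % (m+1) with hM
  have hMlt : M < m + 1 := Nat.mod_lt _ (by omega)
  have hiM : ((i : ℕ) : Fin (m+1)) = ((M : ℕ) : Fin (m+1)) := by
    have h := Nat.div_add_mod i (m+1)
    calc ((i:ℕ) : Fin (m+1)) = (((m+1) * (i / (m+1)) + M : ℕ) : Fin (m+1)) := by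
          rw [← hM] at h; rw [h]
      _ = ((M:ℕ):Fin (m+1)) := by
          push_cast
          rw [add_comm ((m:Fin (m+1))) 1, add_comm 1 (m:Fin (m+1)), fin_cast_m_add_one,
            zero_mul, zero_add]
  show vtx s (i : Fin (m+1)) = c i
  rcases Nat.eq_zero_or_pos M with h0 | h1
  · -- M = 0
    have h00 : ((i : ℕ) : Fin (m+1)) = 0 := by rw [hiM, h0]; simp
    have hm1 : (0 : Fin (m+1)) - 1 = ((m : ℕ) : Fin (m+1)) := by
      exact (eq_sub_of_add_eq fin_cast_m_add_one).symm
    have hedge' := (edges_iff _ _).mp (hedge m)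
    have hcm : c (m+1) = c 0 := by have := hper 0; simpa using this
    rw [hmod i, ← hM, h0, h00]
    unfold vtx
    rw [hm1]
    have hv0 : s 0 = sgn (c 0) := by simp [hs]
    have hvm : s ((m : ℕ) : Fin (m+1)) = sgn (c m) := by
      simp [hs, Fin.val_natCast, Nat.mod_eq_of_lt (by omega : m < m + 1)]
    rw [hv0, hvm]
    rw [hcm] at hedge'
    exact hedge'.symm
  · -- M ≥ 1
    have hedge' := (edges_iff _ _).mp (hedge (M-1))
    have hM1 : M - 1 + 1 = M := by omega
    rw [hM1] at hedge'
    have hsub : ((M : ℕ) : Fin (m+1)) - 1 = ((M - 1 : ℕ) : Fin (m+1)) := by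
      have h2 : (M : ℕ) = (M - 1) + 1 := by omega
      rw [h2]; push_cast; ring
    rw [hmod i, ← hM, hiM]
    unfold vtx
    rw [hsub]
    have hvM : s ((M : ℕ) : Fin (m+1)) = sgn (c M) := by
      simp [hs, Fin.val_natCast, Nat.mod_eq_of_lt hMlt]
    have hvM1 : s ((M - 1 : ℕ) : Fin (m+1)) = sgn (c (M-1)) := by
      simp [hs, Fin.val_natCast, Nat.mod_eq_of_lt (by omega : M - 1 < m + 1)]
    rw [hvM, hvM1]
    exact hedge'.symm

lemma omega_eq (p m n : ℕ) :
    omega p (m+1) n = Nat.card {s : Fin (m+1) → Bool //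
      (∀ i < m+1, 0 ≤ vf p (vtx s (i : Fin (m+1))) (digit p n i)
          ∧ vf p (vtx s (i : Fin (m+1))) (digit p n i) ≤ (p:ℤ)-1)
      ∧ (∑ i ∈ Finset.range (m+1),
            vf p (vtx s (i : Fin (m+1))) (digit p n i) * (p:ℤ)^i) ≠ (p:ℤ)^(m+1) - 1} := by
  unfold omega
  apply (Nat.card_eq_of_bijective
    (fun s => ⟨walk s.1, fun i => walk_periodic _ i, fun i => walk_edges _ i, s.2.1, s.2.2⟩)
    ?_).symm
  constructor
  · intro a b hab
    exact Subtype.ext (walk_inj (congrArg Subtype.val hab))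
  · rintro ⟨c, hper, hedge, hcomp, hval⟩
    have hkey := walk_eq c hper hedge
    have h2 : ∀ i : ℕ, vtx (fun j : Fin (m+1) => sgn (c j.val)) (i : Fin (m+1)) = c i :=
      fun i => congrFun hkey i
    refine ⟨⟨fun j : Fin (m+1) => sgn (c j.val), ?_, ?_⟩, Subtype.ext hkey⟩
    · simp only [h2]; exact hcomp
    · simp only [h2]; exact hval

lemma cycle_prop {m : ℕ} (P : Fin (m+1) → Prop) (h : ∀ i, P i → P (i+1))
    {i : Fin (m+1)} (hi : P i) : ∀ j, P j := by
  have hk : ∀ k : ℕ, P (i + (k : Fin (m+1))) := by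
    intro k
    induction k with
    | zero => simpa using hi
    | succ k ih =>
      have h2 : i + ((k+1 : ℕ) : Fin (m+1)) = (i + (k : Fin (m+1))) + 1 := by push_cast; ring
      rw [h2]; exact h _ ih
  intro j
  have := hk ((j - i).val)
  rwa [Fin.cast_val_eq_self, add_comm, sub_add_cancel] at this

lemma const_of_step {m : ℕ} (s : Fin (m+1) → Bool) (h : ∀ i, s i = s (i-1)) :
    ∀ j, s j = s 0 := by
  refine cycle_prop (fun j => s j = s 0) (fun i hi => ?_) (i := 0) rfl
  show s (i+1) = s 0
  rw [h (i+1), add_sub_cancel_right]; exact hi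

lemma chain_lemma {m : ℕ} (D : Finset (Fin (m+1))) (s : Fin (m+1) → Bool)
    (hs : ∀ i ∈ D, s i = s (i-1)) :
    ∀ k : ℕ, ∀ i : Fin (m+1), (∀ j < k, i - (j : Fin (m+1)) ∈ D) →
      s i = s (i - (k : Fin (m+1))) := by
  intro k
  induction k with
  | zero => intro i _; simp
  | succ k ih =>
    intro i h
    have h0 : i ∈ D := by have := h 0 (Nat.succ_pos k); simpa using this
    have hrec := ih (i - 1) (fun j hj => by
      have := h (j+1) (by omega)
      have he : i - ((j+1 : ℕ) : Fin (m+1)) = i - 1 - (j : Fin (m+1)) := by push_cast; ring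
      rwa [he] at this)
    rw [hs i h0, hrec]
    congr 1
    push_cast; ring

lemma card_compat {m : ℕ} (D : Finset (Fin (m+1))) (hD : ∃ j, j ∉ D) :
    Nat.card {s : Fin (m+1) → Bool // ∀ i ∈ D, s i = s (i-1)} = 2 ^ (m + 1 - D.card) := by
  obtain ⟨j0, hj0⟩ := hD
  have hex : ∀ i : Fin (m+1), ∃ k : ℕ, i - (k : Fin (m+1)) ∉ D := fun i =>
    ⟨(i - j0).val, by rwa [Fin.cast_val_eq_self, sub_sub_cancel]⟩
  set ρ : {s : Fin (m+1) → Bool // ∀ i ∈ D, s i = s (i-1)} → ({i : Fin (m+1) // i ∉ D} → Bool) :=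
    fun s j => s.1 j.1 with hρ
  have hinj : Function.Injective ρ := by
    rintro ⟨s, hs⟩ ⟨s', hs'⟩ h
    apply Subtype.ext; funext i
    set k := Nat.find (hex i) with hk
    have hmin : ∀ j < k, i - (j : Fin (m+1)) ∈ D := fun j hj =>
      not_not.mp (Nat.find_min (hex i) hj)
    have hspec : i - (k : Fin (m+1)) ∉ D := Nat.find_spec (hex i)
    have e1 := chain_lemma D s hs k i hmin
    have e2 := chain_lemma D s' hs' k i hmin
    have e3 : s (i - (k : Fin (m+1))) = s' (i - (k : Fin (m+1))) :=
      congrFun h ⟨i - (k : Fin (m+1)), hspec⟩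
    show s i = s' i
    rw [e1, e3, ← e2]
  have hsurj : Function.Surjective ρ := by
    intro t
    set k : Fin (m+1) → ℕ := fun i => Nat.find (hex i) with hkdef
    set a : Fin (m+1) → Fin (m+1) := fun i => i - ((k i : ℕ) : Fin (m+1)) with hadef
    have ha : ∀ i, a i ∉ D := fun i => Nat.find_spec (hex i)
    have hcon : ∀ i ∈ D, a i = a (i - 1) := by
      intro i hi
      have hk1 : 1 ≤ k i := by
        rcases Nat.eq_zero_or_pos (k i) with h | h
        · exfalso; apply ha i; have : a i = i := by rw [hadef]; simp [h]
          rwa [this]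
        · omega
      have hcast : ((k i - 1 : ℕ) : Fin (m+1)) = ((k i : ℕ) : Fin (m+1)) - 1 :=
        Nat.cast_sub hk1
      have hw1 : (i - 1) - ((k i - 1 : ℕ) : Fin (m+1)) = a i := by
        rw [hcast, hadef]; ring
      have le1 : k (i-1) ≤ k i - 1 := Nat.find_le (by rw [hw1]; exact ha i)
      have hw2 : i - ((k (i-1) + 1 : ℕ) : Fin (m+1)) = a (i - 1) := by
        rw [hadef]; push_cast; ring
      have le2 : k i ≤ k (i-1) + 1 := Nat.find_le (by rw [hw2]; exact ha (i-1))
      have : k (i-1) = k i - 1 := by omega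
      rw [hadef]
      show i - _ = (i - 1) - ((k (i-1) : ℕ) : Fin (m+1))
      rw [this, hcast]; ring
    refine ⟨⟨fun i => t ⟨a i, ha i⟩, ?_⟩, ?_⟩
    · intro i hi
      show t ⟨a i, ha i⟩ = t ⟨a (i-1), ha (i-1)⟩
      exact congrArg t (Subtype.ext (hcon i hi))
    · funext j
      show t ⟨a j.1, ha j.1⟩ = t j
      have hk0 : k j.1 = 0 := Nat.find_eq_zero (hex j.1) |>.mpr (by simpa using j.2)
      have : a j.1 = j.1 := by rw [hadef]; simp [hk0]
      congr 1
      exact Subtype.ext this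
  rw [Nat.card_congr (Equiv.ofBijective ρ ⟨hinj, hsurj⟩), Nat.card_eq_fintype_card,
    Fintype.card_fun, Fintype.card_bool, Fintype.card_subtype_compl,
    Fintype.card_fin, Fintype.card_coe]

lemma vf_zero' (p : ℕ) (x : ℤ) : vf p 0 x = x := rfl
lemma vf_one' (p : ℕ) (x : ℤ) : vf p 1 x = (p:ℤ) - 1 - x := rfl
lemma vf_two' (p : ℕ) (x : ℤ) : vf p 2 x = x + 1 := rfl
lemma vf_three' (p : ℕ) (x : ℤ) : vf p 3 x = (p:ℤ) - 2 - x := rfl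

lemma omega_zero (p m : ℕ) (hp : 2 ≤ p) : omega p (m+1) 0 = 2 ^ (m+1) - 1 := by
  have hpz : (2:ℤ) ≤ (p:ℤ) := by exact_mod_cast hp
  have hd : ∀ i : ℕ, digit p 0 i = 0 := fun i => by simp [digit]
  have hcomp : ∀ (v : Fin 4), 0 ≤ vf p v 0 ∧ vf p v 0 ≤ (p:ℤ) - 1 := by
    intro v
    simp only [vf]
    split_ifs <;> omega
  rw [omega_eq]
  have hiff : ∀ s : Fin (m+1) → Bool,
      ((∀ i < m+1, 0 ≤ vf p (vtx s (i : Fin (m+1))) (digit p 0 i)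
          ∧ vf p (vtx s (i : Fin (m+1))) (digit p 0 i) ≤ (p:ℤ)-1)
      ∧ (∑ i ∈ Finset.range (m+1),
            vf p (vtx s (i : Fin (m+1))) (digit p 0 i) * (p:ℤ)^i) ≠ (p:ℤ)^(m+1) - 1)
      ↔ ¬ (s = fun _ => true) := by
    intro s
    have hA : ∀ i < m+1, 0 ≤ vf p (vtx s (i : Fin (m+1))) (digit p 0 i)
        ∧ vf p (vtx s (i : Fin (m+1))) (digit p 0 i) ≤ (p:ℤ)-1 := by
      intro i _; rw [hd]; exact hcomp _
    have hmax := sum_eq_iff_allmax p (m+1) hp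
      (fun i => vf p (vtx s (i : Fin (m+1))) (digit p 0 i))
      (fun i hi => hA i hi)
    beta_reduce at hmax
    constructor
    · rintro ⟨-, hval⟩ hcontra
      apply hval
      rw [hmax]
      intro i _
      rw [hd, hcontra]
      have : vtx (fun _ => true) ((i:ℕ) : Fin (m+1)) = 1 := rfl
      rw [this, vf_one']; ring
    · intro hne
      refine ⟨hA, fun heq => hne ?_⟩
      have hall := hmax.mp heq
      funext j
      have hlt : ((j+1 : Fin (m+1))).val < m + 1 := (j+1).isLt
      have h1 := hall _ hlt
      rw [Fin.cast_val_eq_self, hd, vtx_succ] at h1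
      show s j = true
      cases hj : s j
      · exfalso
        rw [hj] at h1
        cases hj1 : s (j+1) <;> rw [hj1] at h1
        · rw [show mkv false false = 0 from rfl, vf_zero'] at h1; omega
        · rw [show mkv true false = 3 from rfl, vf_three'] at h1; omega
      · rfl
  rw [Nat.card_congr (Equiv.subtypeEquivRight hiff), Nat.card_eq_fintype_card,
    Fintype.card_subtype_compl, Fintype.card_fun, Fintype.card_bool, Fintype.card_fin,
    Fintype.card_subtype_eq]

lemma omega_max (p m : ℕ) (hp : 2 ≤ p) : omega p (m+1) (p ^ (m+1) - 1) = 1 := by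
  have hpz : (2:ℤ) ≤ (p:ℤ) := by exact_mod_cast hp
  set n := p ^ (m+1) - 1 with hn
  have hd : ∀ i < m+1, digit p n i = (p:ℤ) - 1 := by
    intro i hi
    unfold digit
    rw [hn, digits_pow_sub_one p hp]
    rw [List.getD_eq_getElem _ _ (by simpa using hi)]
    simp only [List.getElem_replicate]
    push_cast [Nat.cast_sub (by omega : 1 ≤ p)]
    ring
  rw [omega_eq]
  have hiff : ∀ s : Fin (m+1) → Bool,
      ((∀ i < m+1, 0 ≤ vf p (vtx s (i : Fin (m+1))) (digit p n i)
          ∧ vf p (vtx s (i : Fin (m+1))) (digit p n i) ≤ (p:ℤ)-1)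
      ∧ (∑ i ∈ Finset.range (m+1),
            vf p (vtx s (i : Fin (m+1))) (digit p n i) * (p:ℤ)^i) ≠ (p:ℤ)^(m+1) - 1)
      ↔ s = fun _ => true := by
    intro s
    constructor
    · rintro ⟨hA, hval⟩
      -- step condition
      have hstep : ∀ j : Fin (m+1), s (j+1) = s j := by
        intro j
        have hlt : ((j+1 : Fin (m+1))).val < m + 1 := (j+1).isLt
        have h1 := hA _ hlt
        rw [Fin.cast_val_eq_self, hd _ hlt, vtx_succ] at h1
        by_contra hne
        cases hj : s j <;> rw [hj] at h1 <;> cases hj1 : s (j+1) <;> rw [hj1] at h1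
        · exact hne (by rw [hj, hj1])
        · rw [show mkv true false = 3 from rfl, vf_three'] at h1; omega
        · rw [show mkv false true = 2 from rfl, vf_two'] at h1; omega
        · exact hne (by rw [hj, hj1])
      have hstep' : ∀ i : Fin (m+1), s i = s (i-1) := by
        intro i
        have := hstep (i-1)
        rwa [sub_add_cancel] at this
      have hconst := const_of_step s hstep'
      cases hs0 : s 0
      · exfalso
        have hsf : s = fun _ => false := funext fun j => by rw [hconst j, hs0]
        apply hval
        have hmax := sum_eq_iff_allmax p (m+1) hp
          (fun i => vf p (vtx s (i : Fin (m+1))) (digit p n i)) (fun i hi => hA i hi)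
        beta_reduce at hmax
        rw [hmax]
        intro i hi
        rw [hsf]
        have : vtx (fun _ => false) ((i:ℕ) : Fin (m+1)) = 0 := rfl
        rw [this, vf_zero', hd _ hi]
      · exact funext fun j => by rw [hconst j, hs0]
    · intro hs
      subst hs
      have hv1 : ∀ i : ℕ, vtx (fun _ : Fin (m+1) => true) ((i:ℕ) : Fin (m+1)) = 1 :=
        fun i => rfl
      constructor
      · intro i hi
        rw [hv1, vf_one', hd _ hi]
        constructor <;> omega
      · have hsum0 : (∑ i ∈ Finset.range (m+1),
            vf p (vtx (fun _ : Fin (m+1) => true) ((i:ℕ) : Fin (m+1))) (digit p n i)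
              * (p:ℤ)^i) = 0 := by
          apply Finset.sum_eq_zero
          intro i hi
          rw [hv1, vf_one', hd _ (Finset.mem_range.mp hi)]
          ring
        rw [hsum0]
        have hple : (p:ℤ) ≤ (p:ℤ)^(m+1) := le_self_pow₀ (by omega) (by omega)
        omega
  rw [Nat.card_congr (Equiv.subtypeEquivRight hiff), Nat.card_eq_fintype_card,
    Fintype.card_subtype_eq]

lemma digit_eq_iff (p n a : ℕ) (hp : 1 ≤ p) :
    digit p n a = (p:ℤ) - 1 ↔ (Nat.digits p n).getD a 0 = p - 1 := by
  unfold digit; omega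

lemma digits_length_le (p f n : ℕ) (hp : 2 ≤ p) (hn : n < p ^ f) :
    (Nat.digits p n).length ≤ f := by
  rcases Nat.eq_zero_or_pos n with h0 | h0
  · subst h0; simp
  · rw [Nat.digits_len _ _ (by omega) (by omega)]
    have := Nat.log_lt_of_lt_pow (by omega : n ≠ 0) hn
    omega

lemma eq_max_of_digits (p f n : ℕ) (hp : 2 ≤ p) (hn : n < p ^ f)
    (h : ∀ i < f, digit p n i = (p:ℤ) - 1) : n = p ^ f - 1 := by
  have hlen : (Nat.digits p n).length ≤ f := digits_length_le p f n hp hn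
  have hlenf : (Nat.digits p n).length = f := by
    by_contra hne
    have hlt : (Nat.digits p n).length < f := by omega
    have h2 := h _ hlt
    rw [digit_eq_iff p n _ (by omega)] at h2
    rw [List.getD_eq_default _ _ (le_refl _)] at h2
    omega
  have hrep : Nat.digits p n = List.replicate f (p - 1) := by
    apply List.ext_getElem (by simp [hlenf])
    intro i h1 h2
    rw [List.getElem_replicate]
    have h3 := h i (by omega)
    rw [digit_eq_iff p n _ (by omega)] at h3
    rwa [List.getD_eq_getElem _ _ h1] at h3
  have := Nat.ofDigits_digits p n
  rw [hrep, ← digits_pow_sub_one p hp f, Nat.ofDigits_digits] at this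
  omega

lemma eq_zero_of_digits (p f n : ℕ) (hp : 2 ≤ p) (hn : n < p ^ f)
    (h : ∀ i < f, digit p n i = 0) : n = 0 := by
  by_contra hne
  have hnil : Nat.digits p n ≠ [] := by
    rw [Nat.digits_ne_nil_iff_ne_zero]; exact hne
  have hlast := Nat.getLast_digit_ne_zero p hne
  have hlen : (Nat.digits p n).length ≤ f := digits_length_le p f n hp hn
  have hpos : 0 < (Nat.digits p n).length := List.length_pos_iff.mpr hnil
  have h2 := h ((Nat.digits p n).length - 1) (by omega)
  unfold digit at h2
  rw [List.getD_eq_getElem _ _ (by omega)] at h2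
  rw [List.getLast_eq_getElem] at hlast
  omega

lemma omega_mid (p m n : ℕ) (hp : 2 ≤ p) (hn0 : 0 < n) (hn1 : n < p ^ (m+1) - 1) :
    omega p (m+1) n
      = 2 ^ ((m+1) - (Finset.univ.filter
          (fun j : Fin (m+1) => digit p n j.val = (p:ℤ) - 1)).card) := by
  have hpz : (2:ℤ) ≤ (p:ℤ) := by exact_mod_cast hp
  have hnpf : n < p ^ (m+1) := by
    have : 1 ≤ p ^ (m+1) := Nat.one_le_pow _ _ (by omega)
    omega
  set D : Finset (Fin (m+1)) :=
    Finset.univ.filter (fun j : Fin (m+1) => digit p n j.val = (p:ℤ) - 1) with hD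
  have hmemD : ∀ j : Fin (m+1), j ∈ D ↔ digit p n j.val = (p:ℤ) - 1 := by
    intro j; rw [hD, Finset.mem_filter]; simp
  have hDne : ∃ j, j ∉ D := by
    by_contra hall
    push_neg at hall
    apply absurd (eq_max_of_digits p (m+1) n hp hnpf ?_) (by omega)
    intro i hi
    have := (hmemD ⟨i, hi⟩).mp (hall ⟨i, hi⟩)
    simpa using this
  rw [omega_eq]
  have hiff : ∀ s : Fin (m+1) → Bool,
      ((∀ i < m+1, 0 ≤ vf p (vtx s (i : Fin (m+1))) (digit p n i)
          ∧ vf p (vtx s (i : Fin (m+1))) (digit p n i) ≤ (p:ℤ)-1)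
      ∧ (∑ i ∈ Finset.range (m+1),
            vf p (vtx s (i : Fin (m+1))) (digit p n i) * (p:ℤ)^i) ≠ (p:ℤ)^(m+1) - 1)
      ↔ ∀ i ∈ D, s i = s (i-1) := by
    intro s
    constructor
    · rintro ⟨hA, -⟩
      intro j hj
      have hdig := (hmemD j).mp hj
      have h1 := hA j.val j.isLt
      rw [Fin.cast_val_eq_self] at h1
      unfold vtx at h1
      rw [hdig] at h1
      by_contra hne
      cases hj1 : s j <;> rw [hj1] at h1 <;> cases hj2 : s (j - 1) <;> rw [hj2] at h1
      · exact hne (by rw [hj1, hj2])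
      · rw [show mkv false true = 2 from rfl, vf_two'] at h1; omega
      · rw [show mkv true false = 3 from rfl, vf_three'] at h1; omega
      · exact hne (by rw [hj1, hj2])
    · intro hcon
      have hA : ∀ i < m+1, 0 ≤ vf p (vtx s (i : Fin (m+1))) (digit p n i)
          ∧ vf p (vtx s (i : Fin (m+1))) (digit p n i) ≤ (p:ℤ)-1 := by
        intro i hi
        set j : Fin (m+1) := (i : Fin (m+1)) with hj
        have hjv : j.val = i := by rw [hj, Fin.val_natCast]; exact Nat.mod_eq_of_lt hi
        have hd0 := digit_nonneg p n i
        have hd1 := digit_le p n i hp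
        by_cases hdig : digit p n i = (p:ℤ) - 1
        · have hjD : j ∈ D := (hmemD j).mpr (by rw [hjv]; exact hdig)
          have hss := hcon j hjD
          unfold vtx
          rw [hss]
          cases hsj : s (j - 1)
          · rw [show mkv false false = 0 from rfl, vf_zero']; omega
          · rw [show mkv true true = 1 from rfl, vf_one']; omega
        · have hd2 : digit p n i ≤ (p:ℤ) - 2 := by omega
          simp only [vf]
          split_ifs <;> omega
      refine ⟨hA, ?_⟩
      intro heq
      have hmax := sum_eq_iff_allmax p (m+1) hp
        (fun i => vf p (vtx s (i : Fin (m+1))) (digit p n i)) (fun i hi => hA i hi)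
      beta_reduce at hmax
      have hall := hmax.mp heq
      have hall' : ∀ j : Fin (m+1), vf p (vtx s j) (digit p n j.val) = (p:ℤ) - 1 := by
        intro j
        have := hall j.val j.isLt
        rwa [Fin.cast_val_eq_self] at this
      -- false propagates forward
      have hprop : ∀ j : Fin (m+1), s j = false → s (j+1) = false := by
        intro j hjf
        have h1 := hall' (j+1)
        unfold vtx at h1
        rw [add_sub_cancel_right, hjf] at h1
        cases hj1 : s (j+1)
        · rfl
        · exfalso
          rw [hj1, show mkv true false = 3 from rfl, vf_three'] at h1
          have := digit_nonneg p n (j+1).val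
          omega
      by_cases hex : ∃ j : Fin (m+1), s j = false
      · obtain ⟨j0, hj0⟩ := hex
        have hallf : ∀ j : Fin (m+1), s j = false :=
          cycle_prop (fun j => s j = false) hprop hj0
        have : ∀ i < m+1, digit p n i = (p:ℤ) - 1 := by
          intro i hi
          have h1 := hall' ((i : ℕ) : Fin (m+1))
          have hjv : (((i:ℕ) : Fin (m+1))).val = i := by
            rw [Fin.val_natCast]; exact Nat.mod_eq_of_lt hi
          unfold vtx at h1
          rw [hallf, hallf, show mkv false false = 0 from rfl, vf_zero', hjv] at h1
          exact h1
        exact absurd (eq_max_of_digits p (m+1) n hp hnpf this) (by omega)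
      · push_neg at hex
        have hallt : ∀ j : Fin (m+1), s j = true := by
          intro j; cases h : s j
          · exact absurd h (hex j)
          · rfl
        have : ∀ i < m+1, digit p n i = 0 := by
          intro i hi
          have h1 := hall' ((i : ℕ) : Fin (m+1))
          have hjv : (((i:ℕ) : Fin (m+1))).val = i := by
            rw [Fin.val_natCast]; exact Nat.mod_eq_of_lt hi
          unfold vtx at h1
          rw [hallt, hallt, show mkv true true = 1 from rfl, vf_one', hjv] at h1
          omega
        exact absurd (eq_zero_of_digits p (m+1) n hp hnpf this) (by omega)
  rw [Nat.card_congr (Equiv.subtypeEquivRight hiff)]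
  exact card_compat D hDne

theorem omega_values (p f : ℕ) (hp : p.Prime) (hf : 1 ≤ f) :
    omega p f 0 = 2 ^ f - 1
    ∧ omega p f (p ^ f - 1) = 1
    ∧ ∀ n : ℕ, 0 < n → n < p ^ f - 1 →
        omega p f n
          = 2 ^ (f - ((Finset.range f).filter
              (fun i => (Nat.digits p n).getD i 0 = p - 1)).card) := by
  obtain ⟨m, rfl⟩ : ∃ m, f = m + 1 := ⟨f - 1, by omega⟩
  have hp2 := hp.two_le
  refine ⟨omega_zero p m hp2, omega_max p m hp2, ?_⟩
  intro n hn0 hn1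
  rw [omega_mid p m n hp2 hn0 hn1]
  have hcard : (Finset.univ.filter (fun j : Fin (m+1) => digit p n j.val = (p:ℤ)-1)).card
      = ((Finset.range (m+1)).filter
          (fun i => (Nat.digits p n).getD i 0 = p - 1)).card := by
    apply Finset.card_bij (fun (j : Fin (m+1)) _ => j.val)
    · intro j hj
      rw [Finset.mem_filter] at hj ⊢
      exact ⟨Finset.mem_range.mpr j.isLt, (digit_eq_iff p n j.val (by omega)).mp hj.2⟩
    · intro a _ b _ h
      exact Fin.val_injective h
    · intro a ha
      rw [Finset.mem_filter, Finset.mem_range] at ha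
      exact ⟨⟨a, ha.1⟩, Finset.mem_filter.mpr
        ⟨Finset.mem_univ _, (digit_eq_iff p n a (by omega)).mpr ha.2⟩, rfl⟩
  rw [hcard]
end
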